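/- A randomized algorithm A : (Fin n → D) → PMF O is ε-differentially private if and only if it is ε-Bayesian₀ differentially private for independent data points, i.e., if and only if for every population distribution P : PMF (Fin n → D) with independent data points (P x = ∏ i, μ i (x i) for some marginals μ : Fin n → PMF D), every index i : Fin n, all values d, d' : D with Pr[D_i = d] > 0 and Pr[D_i = d'] > 0, and every output o : O, one has Pr[O = o ∣ D_i = d] ≤ ENNReal.ofReal (Real.exp ε) * Pr[O = o ∣ D_i = d']. -/

import Mathlib

open Finset in
private lemma aux_sum_prod {n : ℕ} {D : Type} [Fintype D] (f : Fin n → D → ENNReal) :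
    ∑ x : Fin n → D, ∏ j, f j (x j) = ∏ j, ∑ d, f j d := by
  rw [Finset.prod_univ_sum]
  rw [Fintype.piFinset_univ]

private lemma aux_pmf_sum {D : Type} [Fintype D] (p : PMF D) : ∑ d, p d = 1 := by
  rw [← tsum_fintype (L := SummationFilter.unconditional _)]; exact p.tsum_coe

private lemma aux_sum_fix {n : ℕ} {D : Type} [Fintype D] [DecidableEq D] (ν : Fin n → PMF D)
    (i : Fin n) (d : D) :
    ∑ x ∈ Finset.univ.filter (fun x : Fin n → D => x i = d), ∏ j, ν j (x j) = ν i d := by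
  classical
  set g : Fin n → D → ENNReal := fun j e => if j = i then (if e = d then ν i d else 0) else ν j e
    with hg
  have h1 : ∑ x ∈ Finset.univ.filter (fun x : Fin n → D => x i = d), ∏ j, ν j (x j)
      = ∑ x : Fin n → D, ∏ j, g j (x j) := by
    rw [Finset.sum_filter]
    refine Finset.sum_congr rfl fun x _ => ?_
    by_cases hx : x i = d
    · rw [if_pos hx]
      refine Finset.prod_congr rfl fun j _ => ?_
      by_cases hj : j = i
      · subst hj; simp [hg, hx]
      · simp [hg, hj]
    · rw [if_neg hx]
      refine (Finset.prod_eq_zero (Finset.mem_univ i) ?_).symm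
      simp [hg, hx]
  rw [h1, aux_sum_prod]
  have h2 : ∀ j, ∑ e, g j e = if j = i then ν i d else 1 := by
    intro j
    by_cases hj : j = i
    · subst hj; simp [hg, Finset.sum_ite_eq' Finset.univ d]
    · simp [hg, hj, aux_pmf_sum]
  calc ∏ j, ∑ e, g j e = ∏ j, (if j = i then ν i d else 1) := by
        exact Finset.prod_congr rfl fun j _ => h2 j
    _ = ν i d := by simp

private lemma aux_reindex {n : ℕ} {D : Type} [Fintype D] [DecidableEq D] (i : Fin n) (d d' : D)
    (F : (Fin n → D) → ENNReal) :
    ∑ x ∈ Finset.univ.filter (fun x : Fin n → D => x i = d), F (Function.update x i d')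
      = ∑ y ∈ Finset.univ.filter (fun y : Fin n → D => y i = d'), F y := by
  classical
  refine Finset.sum_nbij' (fun x => Function.update x i d') (fun y => Function.update y i d)
    ?_ ?_ ?_ ?_ ?_
  · intro x hx; simp
  · intro y hy; simp
  · intro x hx
    simp only [Finset.mem_filter] at hx
    rw [Function.update_idem, ← hx.2, Function.update_eq_self]
  · intro y hy
    simp only [Finset.mem_filter] at hy
    rw [Function.update_idem, ← hy.2, Function.update_eq_self]
  · intro x hx; rfl

private lemma aux_key {n : ℕ} {D O : Type} [Fintype D] [DecidableEq D] [Fintype O]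
    (A : (Fin n → D) → PMF O) (ε : ℝ)
    (hDP : ∀ (x : Fin n → D) (i : Fin n) (d' : D) (o : O),
        A x o ≤ ENNReal.ofReal (Real.exp ε) * A (Function.update x i d') o)
    (μ : Fin n → PMF D) (i : Fin n) (d d' : D) (o : O) :
    μ i d' * ∑ x ∈ Finset.univ.filter (fun x : Fin n → D => x i = d),
        (∏ j, μ j (x j)) * A x o
      ≤ ENNReal.ofReal (Real.exp ε) *
        (μ i d * ∑ y ∈ Finset.univ.filter (fun y : Fin n → D => y i = d'),
          (∏ j, μ j (y j)) * A y o) := by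
  classical
  have hterm : ∀ x ∈ Finset.univ.filter (fun x : Fin n → D => x i = d),
      μ i d' * ((∏ j, μ j (x j)) * A x o)
        ≤ ENNReal.ofReal (Real.exp ε) *
          (μ i d * ((∏ j, μ j (Function.update x i d' j)) * A (Function.update x i d') o)) := by
    intro x hx
    simp only [Finset.mem_filter] at hx
    have hP : μ i d' * ∏ j, μ j (x j) = μ i d * ∏ j, μ j (Function.update x i d' j) := by
      rw [Finset.prod_eq_mul_prod_sdiff_singleton_of_mem (Finset.mem_univ i) (fun j => μ j (x j)),
          Finset.prod_eq_mul_prod_sdiff_singleton_of_mem (Finset.mem_univ i)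
            (fun j => μ j (Function.update x i d' j))]
      have hoff : ∏ j ∈ Finset.univ \ {i}, μ j (Function.update x i d' j)
          = ∏ j ∈ Finset.univ \ {i}, μ j (x j) := by
        refine Finset.prod_congr rfl fun j hj => ?_
        simp only [Finset.mem_sdiff, Finset.mem_singleton] at hj
        rw [Function.update_of_ne hj.2]
      rw [hoff, Function.update_self, hx.2]
      ring
    calc μ i d' * ((∏ j, μ j (x j)) * A x o)
        ≤ μ i d' * ((∏ j, μ j (x j)) * (ENNReal.ofReal (Real.exp ε) * A (Function.update x i d') o)) := by
          gcongr; exact hDP x i d' o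
      _ = (μ i d' * ∏ j, μ j (x j)) * (ENNReal.ofReal (Real.exp ε) * A (Function.update x i d') o) := by
          ring
      _ = (μ i d * ∏ j, μ j (Function.update x i d' j)) *
            (ENNReal.ofReal (Real.exp ε) * A (Function.update x i d') o) := by rw [hP]
      _ = ENNReal.ofReal (Real.exp ε) *
            (μ i d * ((∏ j, μ j (Function.update x i d' j)) * A (Function.update x i d') o)) := by
          ring
  calc μ i d' * ∑ x ∈ Finset.univ.filter (fun x : Fin n → D => x i = d),
        (∏ j, μ j (x j)) * A x o
      = ∑ x ∈ Finset.univ.filter (fun x : Fin n → D => x i = d),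
          μ i d' * ((∏ j, μ j (x j)) * A x o) := Finset.mul_sum _ _ _
    _ ≤ ∑ x ∈ Finset.univ.filter (fun x : Fin n → D => x i = d),
          ENNReal.ofReal (Real.exp ε) *
            (μ i d * ((∏ j, μ j (Function.update x i d' j)) * A (Function.update x i d') o)) :=
        Finset.sum_le_sum hterm
    _ = ∑ y ∈ Finset.univ.filter (fun y : Fin n → D => y i = d'),
          ENNReal.ofReal (Real.exp ε) * (μ i d * ((∏ j, μ j (y j)) * A y o)) :=
        aux_reindex i d d' (fun y => ENNReal.ofReal (Real.exp ε) *
          (μ i d * ((∏ j, μ j (y j)) * A y o)))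
    _ = ENNReal.ofReal (Real.exp ε) *
          (μ i d * ∑ y ∈ Finset.univ.filter (fun y : Fin n → D => y i = d'),
            (∏ j, μ j (y j)) * A y o) := by
        rw [Finset.mul_sum, Finset.mul_sum]


theorem dp_iff_independent_bayesian0_dp
    {n : ℕ} {D O : Type} [Fintype D] [DecidableEq D] [Nonempty D] [Fintype O] [Nonempty O]
    (A : (Fin n → D) → PMF O) (ε : ℝ) :
    (∀ (x : Fin n → D) (i : Fin n) (d' : D) (o : O),
        A x o ≤ ENNReal.ofReal (Real.exp ε) * A (Function.update x i d') o)
    ↔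
    (∀ (P : PMF (Fin n → D)),
        (∃ μ : Fin n → PMF D, ∀ x : Fin n → D, P x = ∏ i : Fin n, μ i (x i)) →
        ∀ (i : Fin n) (d d' : D) (o : O),
          (∑ x ∈ Finset.univ.filter (fun x : Fin n → D => x i = d), P x) > 0 →
          (∑ x ∈ Finset.univ.filter (fun x : Fin n → D => x i = d'), P x) > 0 →
          (∑ x ∈ Finset.univ.filter (fun x : Fin n → D => x i = d), P x * A x o) /
              (∑ x ∈ Finset.univ.filter (fun x : Fin n → D => x i = d), P x)
            ≤ ENNReal.ofReal (Real.exp ε) *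
              ((∑ x ∈ Finset.univ.filter (fun x : Fin n → D => x i = d'), P x * A x o) /
                (∑ x ∈ Finset.univ.filter (fun x : Fin n → D => x i = d'), P x))) := by
  constructor
  · -- forward
    rintro hDP P ⟨μ, hμ⟩ i d d' o hd hd'
    have hden : ∀ e : D, ∑ x ∈ Finset.univ.filter (fun x : Fin n → D => x i = e), P x
        = μ i e := by
      intro e
      rw [← aux_sum_fix μ i e]
      exact Finset.sum_congr rfl fun x _ => hμ x
    have hnum : ∀ e : D, ∑ x ∈ Finset.univ.filter (fun x : Fin n → D => x i = e), P x * A x o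
        = ∑ x ∈ Finset.univ.filter (fun x : Fin n → D => x i = e), (∏ j, μ j (x j)) * A x o := by
      intro e
      exact Finset.sum_congr rfl fun x _ => by rw [hμ x]
    rw [hden d, hden d'] at *
    rw [hnum d, hnum d']
    set E := ENNReal.ofReal (Real.exp ε)
    set Nd := ∑ x ∈ Finset.univ.filter (fun x : Fin n → D => x i = d), (∏ j, μ j (x j)) * A x o
    set Nd' := ∑ x ∈ Finset.univ.filter (fun x : Fin n → D => x i = d'), (∏ j, μ j (x j)) * A x o
    have hb0 : μ i d ≠ 0 := hd.ne'
    have he0 : μ i d' ≠ 0 := hd'.ne'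
    have hbt : μ i d ≠ ⊤ := PMF.apply_ne_top _ _
    have het : μ i d' ≠ ⊤ := PMF.apply_ne_top _ _
    have hkey : μ i d' * Nd ≤ E * (μ i d * Nd') := aux_key A ε hDP μ i d d' o
    calc Nd / μ i d = (μ i d' * Nd) / (μ i d' * μ i d) :=
          (ENNReal.mul_div_mul_left _ _ he0 het).symm
      _ ≤ (E * (μ i d * Nd')) / (μ i d' * μ i d) := ENNReal.div_le_div_right hkey _
      _ = (μ i d * (E * Nd')) / (μ i d * μ i d') := by ring_nf
      _ = (E * Nd') / μ i d' := ENNReal.mul_div_mul_left _ _ hb0 hbt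
      _ = E * (Nd' / μ i d') := mul_div_assoc _ _ _
  · -- reverse
    intro h x i d' o
    classical
    set c : ENNReal := (Fintype.card D : ENNReal)⁻¹ with hc
    have hc0 : c ≠ 0 := by
      simp [hc]
    have hct : c ≠ ⊤ := by
      simp [hc, Fintype.card_ne_zero]
    set μ : Fin n → PMF D := fun j => if j = i then PMF.uniformOfFintype D else PMF.pure (x j)
      with hμdef
    have hsum1 : ∑ y : Fin n → D, ∏ j, μ j (y j) = 1 := by
      rw [aux_sum_prod]
      simp [aux_pmf_sum]
    set P : PMF (Fin n → D) := PMF.ofFintype (fun y => ∏ j, μ j (y j)) hsum1 with hPdef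
    have hP : ∀ y, P y = ∏ j, μ j (y j) := fun y => PMF.ofFintype_apply hsum1 y
    have hfix : ∀ e : D, ∑ y ∈ Finset.univ.filter (fun y : Fin n → D => y i = e), P y
        = c := by
      intro e
      rw [show (∑ y ∈ Finset.univ.filter (fun y : Fin n → D => y i = e), P y)
          = ∑ y ∈ Finset.univ.filter (fun y : Fin n → D => y i = e), ∏ j, μ j (y j) from
          Finset.sum_congr rfl fun y _ => hP y, aux_sum_fix μ i e]
      simp [hμdef, PMF.uniformOfFintype_apply, hc]
    have hnum : ∀ e : D,
        ∑ y ∈ Finset.univ.filter (fun y : Fin n → D => y i = e), P y * A y o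
          = c * A (Function.update x i e) o := by
      intro e
      rw [Finset.sum_eq_single_of_mem (Function.update x i e)]
      · rw [hP]
        congr 1
        calc ∏ j, μ j (Function.update x i e j)
            = ∏ j, (if j = i then c else 1) := by
              refine Finset.prod_congr rfl fun j _ => ?_
              by_cases hj : j = i
              · subst hj; simp [hμdef, PMF.uniformOfFintype_apply, hc]
              · simp [hμdef, hj, Function.update_of_ne hj]
          _ = c := by simp
      · simp
      · intro y hy hne
        simp only [Finset.mem_filter] at hy
        obtain ⟨j, hj⟩ := Function.ne_iff.mp hne
        have hji : j ≠ i := by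
          rintro rfl
          exact hj (by rw [hy.2, Function.update_self])
        have hyx : y j ≠ x j := by
          rwa [Function.update_of_ne hji] at hj
        have : P y = 0 := by
          rw [hP]
          refine Finset.prod_eq_zero (Finset.mem_univ j) ?_
          simp [hμdef, hji, PMF.pure_apply, hyx]
        rw [this, zero_mul]
    have hpos : ∀ e : D,
        (∑ y ∈ Finset.univ.filter (fun y : Fin n → D => y i = e), P y) > 0 := by
      intro e
      rw [hfix e]
      exact hc0.bot_lt
    have := h P ⟨μ, hP⟩ i (x i) d' o (hpos _) (hpos _)
    rw [hfix, hfix, hnum, hnum] at this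
    have hdiv : ∀ a : ENNReal, c * a / c = a := by
      intro a
      rw [mul_comm, mul_div_assoc, ENNReal.div_self hc0 hct, mul_one]
    rw [hdiv, hdiv, Function.update_eq_self] at this
    exact this
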